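/- Under the hypotheses of the propagation-of-regularity lemma (ℱ uniformly locally Lipschitz and uniformly linearly bounded, boundary estimate T(z) ≤ C₀ ω(d(z,𝒯)) near each point of ∂𝒯), one has lim_{x → x₀} T(x) = +∞ for every x₀ ∈ ∂ℛ, where ℛ = { x : T(x) < ∞ }. -/

import Mathlib

open Metric Set Filter
open scoped ENNReal Topology

/-- Reachability relation for a family `F` of vector fields: `Reach F x t z` holds iff there
is a concatenation of integral curves of fields in `F`, of total duration `t ≥ 0`,
going from `x` to `z`. -/
inductive Reach {n : ℕ} (F : Set (EuclideanSpace ℝ (Fin n) → EuclideanSpace ℝ (Fin n))) :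
    EuclideanSpace ℝ (Fin n) → ℝ → EuclideanSpace ℝ (Fin n) → Prop
  | refl (x : EuclideanSpace ℝ (Fin n)) : Reach F x 0 x
  | step {x z w : EuclideanSpace ℝ (Fin n)} {t s : ℝ} (h : Reach F x t z)
      {f : EuclideanSpace ℝ (Fin n) → EuclideanSpace ℝ (Fin n)} (hf : f ∈ F) (hs : 0 ≤ s)
      (y : ℝ → EuclideanSpace ℝ (Fin n)) (h0 : y 0 = z)
      (hy : ∀ u ∈ Set.Icc (0 : ℝ) s, HasDerivAt y (f (y u)) u)
      (hw : y s = w) : Reach F x (t + s) w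

/-- The minimum time function to reach the target `T` by `F`-trajectories (`+∞` if
the target cannot be reached). -/
noncomputable def minTime {n : ℕ}
    (F : Set (EuclideanSpace ℝ (Fin n) → EuclideanSpace ℝ (Fin n)))
    (T : Set (EuclideanSpace ℝ (Fin n))) (x : EuclideanSpace ℝ (Fin n)) : ℝ≥0∞ :=
  sInf (ENNReal.ofReal '' {r : ℝ | 0 ≤ r ∧ ∃ z ∈ T, Reach F x r z})

/-- A modulus: nonnegative, nondecreasing, with ω(0+) = 0. -/
def IsModulus (ω : ℝ → ℝ) : Prop :=
  (∀ r, 0 ≤ ω r) ∧ Monotone ω ∧ Tendsto ω (𝓝[>] (0 : ℝ)) (𝓝 0)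

/-- Uniform local Lipschitz continuity of a family of vector fields. -/
def UnifLocLipschitz {n : ℕ}
    (F : Set (EuclideanSpace ℝ (Fin n) → EuclideanSpace ℝ (Fin n))) : Prop :=
  ∀ K : Set (EuclideanSpace ℝ (Fin n)), Bornology.IsBounded K →
    ∃ L : NNReal, ∀ f ∈ F, LipschitzOnWith L f K

/-- Uniform linear growth bound for a family of vector fields. -/
def UnifLinBounded {n : ℕ}
    (F : Set (EuclideanSpace ℝ (Fin n) → EuclideanSpace ℝ (Fin n))) : Prop :=
  ∃ C : ℝ, 0 ≤ C ∧ ∀ f ∈ F, ∀ x, ‖f x‖ ≤ C * (‖x‖ + 1)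

section AuxProofStmt7

open Real
open scoped NNReal

variable {n : ℕ} {F : Set (EuclideanSpace ℝ (Fin n) → EuclideanSpace ℝ (Fin n))}

local notation "E" => EuclideanSpace ℝ (Fin n)

lemma exists_step (C₁ R₁ : ℝ) :
    ∃ h : ℝ, 0 < h ∧ (R₁ + 2) * (exp (C₁ * h) - 1) ≤ 1 ∧ C₁ * (R₁ + 4) * (2 * h) ≤ 2 := by
  have t1 : Tendsto (fun h : ℝ => (R₁ + 2) * (exp (C₁ * h) - 1)) (𝓝 0) (𝓝 0) := by
    have h1 : Continuous (fun h : ℝ => (R₁ + 2) * (exp (C₁ * h) - 1)) := by continuity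
    have := h1.tendsto 0
    simpa using this
  have t2 : Tendsto (fun h : ℝ => C₁ * (R₁ + 4) * (2 * h)) (𝓝 0) (𝓝 0) := by
    have h1 : Continuous (fun h : ℝ => C₁ * (R₁ + 4) * (2 * h)) := by continuity
    have := h1.tendsto 0
    simpa using this
  have e1 := t1.eventually_le_const (by norm_num : (0:ℝ) < 1)
  have e2 := t2.eventually_le_const (by norm_num : (0:ℝ) < 2)
  have e3 : ∀ᶠ h : ℝ in 𝓝[>] 0, 0 < h := self_mem_nhdsWithin
  obtain ⟨h, ⟨h1, h2⟩, h3⟩ := (((e1.and e2).filter_mono nhdsWithin_le_nhds).and e3).exists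
  exact ⟨h, h3, h1, h2⟩

lemma reach_nonneg {x z : E} {t : ℝ} (h : Reach F x t z) : 0 ≤ t := by
  induction h with
  | refl => exact le_refl _
  | step h hf hs y h0 hy hw ih => exact add_nonneg ih hs

lemma reach_trans {x z w : E} {t s : ℝ} (h1 : Reach F x t z) (h2 : Reach F z s w) :
    Reach F x (t + s) w := by
  induction h2 with
  | refl => simpa using h1
  | step h hf hs y h0 hy hw ih =>
    rw [← add_assoc]
    exact ih.step hf hs y h0 hy hw

lemma curve_norm_le {C₁ : ℝ} (hC₁ : 0 < C₁) {f : E → E}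
    (hfb : ∀ x, ‖f x‖ ≤ C₁ * (‖x‖ + 1)) {y : ℝ → E} {s : ℝ}
    (hy : ∀ u ∈ Icc (0:ℝ) s, HasDerivAt y (f (y u)) u) {t : ℝ} (ht : t ∈ Icc (0:ℝ) s) :
    ‖y t‖ + 1 ≤ (‖y 0‖ + 1) * exp (C₁ * t) := by
  have hcont : ContinuousOn y (Icc 0 s) := fun u hu => (hy u hu).continuousAt.continuousWithinAt
  have hb := norm_le_gronwallBound_of_norm_deriv_right_le (f := y) (f' := fun u => f (y u))
    (δ := ‖y 0‖) (K := C₁) (ε := C₁) (a := 0) (b := s) hcont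
    (fun u hu => (hy u (Ico_subset_Icc_self hu)).hasDerivWithinAt)
    le_rfl
    (fun u _ => by
      calc ‖f (y u)‖ ≤ C₁ * (‖y u‖ + 1) := hfb (y u)
        _ = C₁ * ‖y u‖ + C₁ := by ring)
    t ht
  rw [gronwallBound_of_K_ne_0 hC₁.ne'] at hb
  rw [div_self hC₁.ne'] at hb
  simp only [sub_zero, one_mul] at hb
  linarith

lemma reach_norm_le {C₁ : ℝ} (hC₁ : 0 < C₁)
    (hF : ∀ f ∈ F, ∀ x, ‖f x‖ ≤ C₁ * (‖x‖ + 1)) {x z : E} {t : ℝ}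
    (h : Reach F x t z) : ‖z‖ + 1 ≤ (‖x‖ + 1) * exp (C₁ * t) := by
  induction h with
  | refl => simp
  | @step z' w' t' s' h f hf hs y h0 hy hw ih =>
    have h1 := curve_norm_le hC₁ (hF _ hf) hy (right_mem_Icc.mpr hs)
    rw [h0, hw] at h1
    have he : exp (C₁ * (t' + s')) = exp (C₁ * t') * exp (C₁ * s') := by
      rw [← exp_add]; ring_nf
    rw [he]
    have hp := exp_pos (C₁ * s')
    nlinarith [exp_pos (C₁ * t'), norm_nonneg w', norm_nonneg z']

lemma one_step {C₁ R₁ : ℝ} (hC₁ : 0 < C₁) (hR₁ : 1 ≤ R₁) {L : ℝ≥0}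
    {f : E → E} (hfb : ∀ x, ‖f x‖ ≤ C₁ * (‖x‖ + 1))
    (hLipR : LipschitzOnWith L f (closedBall (0 : E) (R₁ + 3)))
    {h : ℝ} (hh0 : 0 < h) (hcontain : (R₁ + 2) * (exp (C₁ * h) - 1) ≤ 1)
    (hPLb : C₁ * (R₁ + 4) * (2 * h) ≤ 2)
    {σ : ℝ} (hσ0 : 0 ≤ σ) (hσh : σ ≤ h)
    {y : ℝ → E} {u s : ℝ} (hu0 : 0 ≤ u) (husσ : u + σ ≤ s)
    (hy : ∀ v ∈ Icc (0:ℝ) s, HasDerivAt y (f (y v)) v)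
    (hyb : ∀ v ∈ Icc (0:ℝ) s, ‖y v‖ ≤ R₁)
    {wu : E} {d : ℝ} (hdu : dist wu (y u) ≤ d) (hd1 : d ≤ 1) :
    ∃ g : ℝ → E, g 0 = wu ∧ (∀ v ∈ Icc (0:ℝ) σ, HasDerivAt g (f (g v)) v) ∧
      dist (g σ) (y (u + σ)) ≤ d * exp (L * σ) := by
  have hd0 : 0 ≤ d := le_trans dist_nonneg hdu
  have hyu : ‖y u‖ ≤ R₁ := hyb u ⟨hu0, by linarith⟩
  have hwu_norm : ‖wu‖ ≤ R₁ + 1 := by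
    calc ‖wu‖ = dist wu 0 := (dist_zero_right wu).symm
      _ ≤ dist wu (y u) + dist (y u) 0 := dist_triangle _ _ _
      _ ≤ d + ‖y u‖ := by rw [dist_zero_right]; exact add_le_add hdu le_rfl
      _ ≤ R₁ + 1 := by linarith
  -- Picard-Lindelöf existence on [-2h, 2h]
  have hball : closedBall wu 2 ⊆ closedBall (0:E) (R₁ + 3) := by
    apply closedBall_subset_closedBall'
    rw [dist_zero_right]; linarith
  have hCpos : (0:ℝ) ≤ C₁ * (R₁ + 4) := by nlinarith
  have hpl : IsPicardLindelof (fun _ x => f x) (tmin := -(2*h)) (tmax := 2*h)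
      ⟨0, by constructor <;> linarith⟩ wu 2 0 (C₁ * (R₁ + 4)).toNNReal L := by
    refine ⟨fun t _ => hLipR.mono (by rw [NNReal.coe_ofNat]; exact hball),
      fun x _ => continuousOn_const, fun t _ x hx => ?_, ?_⟩
    · have hxn : ‖x‖ ≤ R₁ + 3 := by
        have := hball (by simpa using hx)
        rwa [mem_closedBall, dist_zero_right] at this
      calc ‖f x‖ ≤ C₁ * (‖x‖ + 1) := hfb x
        _ ≤ C₁ * (R₁ + 4) := by nlinarith
        _ = _ := (Real.coe_toNNReal _ hCpos).symm
    · simp only [Real.coe_toNNReal _ hCpos, NNReal.coe_ofNat, NNReal.coe_zero, sub_zero,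
        zero_sub, neg_neg, max_self]
      nlinarith
  obtain ⟨g, hg0, hg⟩ := hpl.exists_eq_forall_mem_Icc_hasDerivWithinAt₀
  replace hg0 : g 0 = wu := hg0
  have hgderiv : ∀ v ∈ Icc (0:ℝ) σ, HasDerivAt g (f (g v)) v := by
    intro v hv
    have hmem : Icc (-(2*h)) (2*h) ∈ 𝓝 v :=
      Icc_mem_nhds (by nlinarith [hv.1]) (by nlinarith [hv.2])
    exact (hg v ⟨by nlinarith [hv.1], by nlinarith [hv.2]⟩).hasDerivAt hmem
  refine ⟨g, hg0, hgderiv, ?_⟩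
  have hgcont : ContinuousOn g (Icc 0 σ) := fun v hv =>
    (hgderiv v hv).continuousAt.continuousWithinAt
  -- containment: ‖g v - wu‖ ≤ 1 on [0, σ]
  have hcontain2 : ∀ v ∈ Icc (0:ℝ) σ, ‖g v - wu‖ ≤ 1 := by
    intro v hv
    have hb := norm_le_gronwallBound_of_norm_deriv_right_le (f := fun v => g v - wu)
      (f' := fun v => f (g v)) (δ := 0) (K := C₁) (ε := C₁ * (R₁ + 2)) (a := 0) (b := σ)
      (hgcont.sub continuousOn_const)
      (fun v hv => ((hgderiv v (Ico_subset_Icc_self hv)).sub_const wu).hasDerivWithinAt)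
      (by simp [hg0])
      (fun v hv => by
        have h1 : ‖g v‖ ≤ ‖g v - wu‖ + ‖wu‖ := by
          calc ‖g v‖ = ‖(g v - wu) + wu‖ := by rw [sub_add_cancel]
            _ ≤ ‖g v - wu‖ + ‖wu‖ := norm_add_le _ _
        calc ‖f (g v)‖ ≤ C₁ * (‖g v‖ + 1) := hfb _
          _ ≤ C₁ * ‖g v - wu‖ + C₁ * (R₁ + 2) := by nlinarith)
      v hv
    rw [gronwallBound_of_K_ne_0 hC₁.ne'] at hb
    simp only [zero_mul, zero_add, sub_zero] at hb
    have he : C₁ * (R₁ + 2) / C₁ = R₁ + 2 := by field_simp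
    rw [he] at hb
    have hexp : exp (C₁ * v) ≤ exp (C₁ * h) := by
      apply exp_le_exp.mpr
      nlinarith [hv.1, hv.2]
    calc ‖g v - wu‖ ≤ (R₁ + 2) * (exp (C₁ * v) - 1) := hb
      _ ≤ (R₁ + 2) * (exp (C₁ * h) - 1) := by nlinarith
      _ ≤ 1 := hcontain
  -- Gronwall comparison on [u, u+σ] between y and G := g (· - u)
  set G := fun t => g (t - u) with hG
  have hGderiv : ∀ t ∈ Icc u (u + σ), HasDerivAt G (f (G t)) t := by
    intro t ht
    have h1 : HasDerivAt (fun t : ℝ => t - u) 1 t := (hasDerivAt_id t).sub_const u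
    have h2 := hgderiv (t - u) ⟨by linarith [ht.1], by linarith [ht.2]⟩
    have h3 := h2.scomp t h1
    simp only [one_smul] at h3
    exact h3
  have hcomp := dist_le_of_trajectories_ODE_of_mem (v := fun _ x => f x)
    (s := fun _ => closedBall (0:E) (R₁ + 3)) (K := L) (fun _ _ => hLipR)
    (f := y) (g := G) (a := u) (b := u + σ) (δ := d)
    (fun t ht => (hy t ⟨by linarith [ht.1], by linarith [ht.2]⟩).continuousAt.continuousWithinAt)
    (fun t ht => (hy t ⟨by linarith [ht.1], by linarith [ht.2.le]⟩).hasDerivWithinAt)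
    (fun t ht => by
      rw [mem_closedBall, dist_zero_right]
      have := hyb t ⟨by linarith [ht.1], by linarith [ht.2.le]⟩
      linarith)
    (fun t ht => (hGderiv t ht).continuousAt.continuousWithinAt)
    (fun t ht => (hGderiv t ⟨ht.1, ht.2.le⟩).hasDerivWithinAt)
    (fun t ht => by
      rw [mem_closedBall, dist_zero_right]
      have h1 := hcontain2 (t - u) ⟨by linarith [ht.1], by linarith [ht.2.le]⟩
      have h2 : ‖G t‖ ≤ ‖g (t - u) - wu‖ + ‖wu‖ := by
        calc ‖G t‖ = ‖(g (t - u) - wu) + wu‖ := by rw [hG, sub_add_cancel]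
          _ ≤ ‖g (t - u) - wu‖ + ‖wu‖ := norm_add_le _ _
      linarith)
    (by
      have : G u = wu := by rw [hG]; simp [hg0]
      rw [this, dist_comm]; exact hdu)
    (u + σ) ⟨by linarith, le_rfl⟩
  have hGσ : G (u + σ) = g σ := by rw [hG]; simp
  rw [hGσ, add_sub_cancel_left] at hcomp
  rw [dist_comm]
  exact hcomp

lemma track {C₁ R₁ : ℝ} (hC₁ : 0 < C₁) (hR₁ : 1 ≤ R₁) {L : ℝ≥0}
    {f : E → E} (hf : f ∈ F) (hfb : ∀ x, ‖f x‖ ≤ C₁ * (‖x‖ + 1))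
    (hLipR : LipschitzOnWith L f (closedBall (0 : E) (R₁ + 3)))
    {s : ℝ} (hs : 0 ≤ s) {y : ℝ → E}
    (hy : ∀ u ∈ Icc (0:ℝ) s, HasDerivAt y (f (y u)) u)
    (hyb : ∀ u ∈ Icc (0:ℝ) s, ‖y u‖ ≤ R₁)
    {w₁ : E} {δ : ℝ} (hw₁ : dist w₁ (y 0) ≤ δ)
    (hδ1 : δ * exp (L * s) ≤ 1) :
    ∃ w, Reach F w₁ s w ∧ dist w (y s) ≤ δ * exp (L * s) := by
  have hδ0 : 0 ≤ δ := le_trans dist_nonneg hw₁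
  have hL0 : (0:ℝ) ≤ L := L.2
  have hexp1 : (1:ℝ) ≤ exp (L * s) := by
    rw [← exp_zero]
    exact exp_le_exp.mpr (by positivity)
  obtain ⟨h, hh0, hcontain, hPLb⟩ := exists_step C₁ R₁
  have mono_exp : ∀ u v : ℝ, u ≤ v → δ * exp (L * u) ≤ δ * exp (L * v) := by
    intro u v huv
    have := exp_le_exp.mpr (mul_le_mul_of_nonneg_left huv hL0)
    nlinarith
  have main : ∀ m : ℕ, ∃ w, Reach F w₁ (min (m * h) s) w ∧
      dist w (y (min (m * h) s)) ≤ δ * exp (L * min (m * h) s) := by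
    intro m
    induction m with
    | zero =>
      refine ⟨w₁, ?_, ?_⟩
      · simp only [Nat.cast_zero, zero_mul, min_eq_left hs]
        exact Reach.refl w₁
      · simp only [Nat.cast_zero, zero_mul, min_eq_left hs, mul_zero, exp_zero, mul_one]
        exact hw₁
    | succ m ih =>
      rcases le_or_gt s ((m:ℝ) * h) with hle | hlt
      · have e1 : min ((m:ℝ) * h) s = s := min_eq_right hle
        have e2 : min (((m:ℕ) + 1 : ℕ) * h : ℝ) s = s := by
          apply min_eq_right
          refine hle.trans ?_
          push_cast
          nlinarith
        rw [e1] at ih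
        rw [e2]
        exact ih
      · set u := (m:ℝ) * h with hu
        have hu0 : 0 ≤ u := by positivity
        have e1 : min u s = u := min_eq_left hlt.le
        rw [e1] at ih
        obtain ⟨wu, hreach, hdist⟩ := ih
        set σ := min h (s - u) with hσdef
        have hσ0 : 0 < σ := lt_min hh0 (by linarith)
        have hσh : σ ≤ h := min_le_left _ _
        have husσ : u + σ ≤ s := by
          have := min_le_right h (s - u)
          linarith
        have e2 : min (((m:ℕ) + 1 : ℕ) * h : ℝ) s = u + σ := by
          push_cast
          rw [add_mul, one_mul, ← hu, hσdef]
          rw [show s = u + (s - u) by ring]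
          rw [min_add_add_left]
          congr 1
          ring_nf
        have hd1 : δ * exp (L * u) ≤ 1 :=
          le_trans (mono_exp u s (by linarith)) hδ1
        obtain ⟨g, hg0, hgderiv, hgdist⟩ := one_step hC₁ hR₁ hfb hLipR hh0 hcontain hPLb
          hσ0.le hσh hu0 husσ hy hyb hdist hd1
        refine ⟨g σ, ?_, ?_⟩
        · rw [e2]
          exact hreach.step hf hσ0.le g hg0 hgderiv rfl
        · rw [e2]
          calc dist (g σ) (y (u + σ)) ≤ (δ * exp (L * u)) * exp (L * σ) := hgdist
            _ = δ * exp (L * (u + σ)) := by rw [mul_assoc, ← exp_add, mul_add]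
  obtain ⟨m, hm⟩ := exists_nat_ge (s / h)
  have hms : s ≤ (m:ℝ) * h := by
    rw [div_le_iff₀ hh0] at hm
    linarith
  obtain ⟨w, h1, h2⟩ := main m
  rw [min_eq_right hms] at h1 h2
  exact ⟨w, h1, h2⟩

lemma chaintrack {C₁ R₁ : ℝ} (hC₁ : 0 < C₁)
    (hF : ∀ f ∈ F, ∀ x, ‖f x‖ ≤ C₁ * (‖x‖ + 1)) (hR₁ : 1 ≤ R₁) {L : ℝ≥0}
    (hLipR : ∀ f ∈ F, LipschitzOnWith L f (closedBall (0 : E) (R₁ + 3)))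
    {x z : E} {t : ℝ} (hch : Reach F x t z) {τ δ : ℝ} :
    t ≤ τ → (‖x‖ + 1) * exp (C₁ * τ) ≤ R₁ →
    ∀ x' : E, dist x' x ≤ δ → δ * exp (L * τ) ≤ 1 →
    ∃ w, Reach F x' t w ∧ dist w z ≤ δ * exp (L * t) := by
  have hL0 : (0:ℝ) ≤ L := L.2
  induction hch with
  | refl =>
    intro _ _ x' hx' _
    refine ⟨x', Reach.refl x', ?_⟩
    simpa using hx'
  | @step z' w' t' s' h f hf hs y h0 hy hw ih =>
    intro hτ hxb x' hx' hδ
    have hδ0 : 0 ≤ δ := le_trans dist_nonneg hx'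
    have ht0 : 0 ≤ t' := reach_nonneg h
    have hts : t' ≤ τ := by linarith [hs]
    obtain ⟨w₁, hr1, hd1⟩ := ih hts hxb x' hx' hδ
    have hzb : ‖z'‖ + 1 ≤ (‖x‖ + 1) * exp (C₁ * t') := reach_norm_le hC₁ hF h
    have hx1 : (0:ℝ) ≤ ‖x‖ + 1 := by positivity
    have hyb : ∀ u ∈ Icc (0:ℝ) s', ‖y u‖ ≤ R₁ := by
      intro u hu
      have h1 := curve_norm_le hC₁ (hF f hf) hy hu
      rw [h0] at h1
      have h2 : (‖z'‖ + 1) * exp (C₁ * u) ≤ (‖x‖ + 1) * exp (C₁ * t') * exp (C₁ * u) :=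
        mul_le_mul_of_nonneg_right hzb (exp_pos _).le
      have h3 : (‖x‖ + 1) * exp (C₁ * t') * exp (C₁ * u) = (‖x‖ + 1) * exp (C₁ * (t' + u)) := by
        rw [mul_assoc, ← exp_add, ← mul_add]
      have h4 : exp (C₁ * (t' + u)) ≤ exp (C₁ * τ) :=
        exp_le_exp.mpr (mul_le_mul_of_nonneg_left (by linarith [hu.2]) hC₁.le)
      have h5 : (‖x‖ + 1) * exp (C₁ * (t' + u)) ≤ (‖x‖ + 1) * exp (C₁ * τ) :=
        mul_le_mul_of_nonneg_left h4 hx1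
      nlinarith [exp_pos (C₁ * u)]
    have hδ' : (δ * exp (L * t')) * exp (L * s') ≤ 1 := by
      rw [mul_assoc, ← exp_add, ← mul_add]
      refine le_trans ?_ hδ
      have := exp_le_exp.mpr (mul_le_mul_of_nonneg_left hτ hL0)
      nlinarith
    have hw₁y : dist w₁ (y 0) ≤ δ * exp (L * t') := by rw [h0]; exact hd1
    obtain ⟨w, hr2, hd2⟩ := track hC₁ hR₁ hf (hF f hf) (hLipR f hf) hs hy hyb hw₁y hδ'
    rw [hw] at hd2
    rw [mul_assoc, ← exp_add, ← mul_add] at hd2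
    exact ⟨w, reach_trans hr1 hr2, hd2⟩

lemma minTime_ne_top_iff {T : Set (EuclideanSpace ℝ (Fin n))} {x : E} :
    minTime F T x ≠ ⊤ ↔ ∃ r, 0 ≤ r ∧ ∃ z ∈ T, Reach F x r z := by
  constructor
  · intro h
    by_contra hc
    push_neg at hc
    apply h
    have he : {r : ℝ | 0 ≤ r ∧ ∃ z ∈ T, Reach F x r z} = ∅ := by
      ext r
      simp only [mem_setOf_eq, mem_empty_iff_false, iff_false, not_and]
      rintro hr ⟨z, hz, hre⟩
      exact hc r hr z hz hre
    rw [minTime, he, image_empty]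
    exact sInf_empty
  · rintro ⟨r, hr, z, hz, hre⟩
    have hmem : ENNReal.ofReal r ∈
        ENNReal.ofReal '' {r : ℝ | 0 ≤ r ∧ ∃ z ∈ T, Reach F x r z} :=
      mem_image_of_mem _ ⟨hr, z, hz, hre⟩
    exact ne_top_of_le_ne_top ENNReal.ofReal_ne_top (sInf_le hmem)

lemma mem_target_ne_top {T : Set (EuclideanSpace ℝ (Fin n))} {z : E} (hz : z ∈ T) :
    minTime F T z ≠ ⊤ :=
  minTime_ne_top_iff.mpr ⟨0, le_rfl, z, hz, Reach.refl z⟩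

/-- under the hypotheses of the propagation-of-regularity lemma
(ℱ uniformly locally Lipschitz and uniformly linearly bounded, boundary estimate
T(z) ≤ C₀ ω(d(z,𝒯)) near each point of ∂𝒯), the minimum time blows up at every point of
the boundary of the controllable set ℛ = {x : T(x) < ∞}. -/
theorem stmt_7 {n : ℕ} (F : Set (EuclideanSpace ℝ (Fin n) → EuclideanSpace ℝ (Fin n)))
    (T : Set (EuclideanSpace ℝ (Fin n))) (hTcl : IsClosed T)
    (hLip : UnifLocLipschitz F) (hLin : UnifLinBounded F)
    (ω : ℝ → ℝ) (hω : IsModulus ω)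
    (hbnd : ∀ x₀ ∈ frontier T, ∃ W ∈ 𝓝 x₀, ∃ C₀ : ℝ, 0 ≤ C₀ ∧
      ∀ z ∈ W, minTime F T z ≠ ⊤ ∧
        (minTime F T z).toReal ≤ C₀ * ω (infDist z T)) :
    ∀ x₀ ∈ frontier {x | minTime F T x ≠ ⊤},
      Tendsto (minTime F T) (𝓝 x₀) (𝓝 (⊤ : ℝ≥0∞)) := by
  intro x₀ hx₀
  by_contra hcon
  rw [ENNReal.tendsto_nhds_top_iff_nnreal] at hcon
  push_neg at hcon
  obtain ⟨N, hN⟩ := hcon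
  have hfreq : ∃ᶠ x in 𝓝 x₀, minTime F T x ≤ (N : ℝ≥0∞) := hN
  -- constants
  obtain ⟨C, hC0, hCf⟩ := hLin
  set C₁ : ℝ := C + 1 with hC₁def
  have hC₁ : 0 < C₁ := by linarith
  have hF' : ∀ f ∈ F, ∀ x, ‖f x‖ ≤ C₁ * (‖x‖ + 1) := by
    intro f hf x
    refine (hCf f hf x).trans ?_
    have : (0:ℝ) ≤ ‖x‖ + 1 := by positivity
    nlinarith
  set τ : ℝ := (N : ℝ) + 1 with hτdef
  have hτ0 : 0 < τ := by positivity
  set R₁ : ℝ := (‖x₀‖ + 2) * exp (C₁ * τ) with hR₁def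
  have hexpτ : (1:ℝ) ≤ exp (C₁ * τ) := by
    rw [← exp_zero]; exact exp_le_exp.mpr (by positivity)
  have hR₁1 : 1 ≤ R₁ := by nlinarith [norm_nonneg x₀]
  obtain ⟨L, hLipR⟩ := hLip (closedBall (0 : EuclideanSpace ℝ (Fin n)) (R₁ + 3)) isBounded_closedBall
  have hL0 : (0:ℝ) ≤ L := L.2
  -- compact set Z and uniform neighborhood
  set R : Set (EuclideanSpace ℝ (Fin n)) := {x | minTime F T x ≠ ⊤} with hRdef
  set Z : Set (EuclideanSpace ℝ (Fin n)) := T ∩ closedBall 0 R₁ with hZdef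
  have hZcomp : IsCompact Z := (isCompact_closedBall (0 : EuclideanSpace ℝ (Fin n)) R₁).inter_left hTcl
  have hZint : Z ⊆ interior R := by
    intro z hz
    by_cases hzi : z ∈ interior T
    · have : interior T ⊆ R := fun u hu => mem_target_ne_top (interior_subset hu)
      exact interior_mono this (by rw [interior_interior]; exact hzi)
    · have hzf : z ∈ frontier T := ⟨subset_closure hz.1, hzi⟩
      obtain ⟨W, hW, C₀, _, hWprop⟩ := hbnd z hzf
      have : interior W ⊆ R := fun u hu => (hWprop u (interior_subset hu)).1
      exact interior_mono this (mem_interior_iff_mem_nhds.mpr (interior_mem_nhds.mpr hW))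
  obtain ⟨η, hη0, hηZ⟩ := hZcomp.exists_thickening_subset_open isOpen_interior hZint
  -- the tracking radius
  set δ : ℝ := min 1 (η / 2) / exp (L * τ) with hδdef
  have hδ0 : 0 < δ := by positivity
  have hδe : δ * exp (L * τ) = min 1 (η / 2) := div_mul_cancel₀ _ (exp_ne_zero _)
  have hδ1 : δ * exp (L * τ) ≤ 1 := by rw [hδe]; exact min_le_left _ _
  have hδle1 : δ ≤ 1 := by
    have h1 : (1:ℝ) ≤ exp (L * τ) := by
      rw [← exp_zero]; exact exp_le_exp.mpr (by positivity)
    calc δ ≤ min 1 (η/2) := by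
          rw [hδdef]
          exact div_le_self (le_min zero_le_one (by positivity)) h1
      _ ≤ 1 := min_le_left _ _
  -- pick a nearby point with bounded min time
  obtain ⟨xb, hxbball, hxbT⟩ := frequently_iff.mp hfreq (ball_mem_nhds x₀ (by positivity : (0:ℝ) < δ/2))
  -- chain from xb
  have hlt : minTime F T xb < ENNReal.ofReal τ := by
    refine lt_of_le_of_lt hxbT ?_
    rw [hτdef, ENNReal.ofReal_add (N.coe_nonneg) zero_le_one, ENNReal.ofReal_coe_nnreal,
      ENNReal.ofReal_one]
    exact ENNReal.lt_add_right ENNReal.coe_ne_top one_ne_zero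
  rw [minTime] at hlt
  obtain ⟨a, hamem, halt⟩ := sInf_lt_iff.mp hlt
  obtain ⟨r, ⟨hr0, zb, hzbT, hchain⟩, rfl⟩ := hamem
  have hrτ : r ≤ τ := ((ENNReal.ofReal_lt_ofReal_iff_of_nonneg hr0).mp halt).le
  -- norms
  have hxbn : ‖xb‖ ≤ ‖x₀‖ + 1 := by
    have h1 : dist xb x₀ < δ / 2 := mem_ball.mp hxbball
    calc ‖xb‖ = dist xb 0 := (dist_zero_right _).symm
      _ ≤ dist xb x₀ + dist x₀ 0 := dist_triangle _ _ _
      _ ≤ ‖x₀‖ + 1 := by rw [dist_zero_right]; linarith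
  have hxbb : (‖xb‖ + 1) * exp (C₁ * τ) ≤ R₁ := by
    rw [hR₁def]
    have : ‖xb‖ + 1 ≤ ‖x₀‖ + 2 := by linarith
    nlinarith [exp_pos (C₁ * τ)]
  have hzbZ : zb ∈ Z := by
    refine ⟨hzbT, ?_⟩
    rw [mem_closedBall, dist_zero_right]
    have h1 := reach_norm_le hC₁ hF' hchain
    have h2 : exp (C₁ * r) ≤ exp (C₁ * τ) :=
      exp_le_exp.mpr (mul_le_mul_of_nonneg_left hrτ hC₁.le)
    have h3 : (‖xb‖ + 1) * exp (C₁ * r) ≤ (‖xb‖ + 1) * exp (C₁ * τ) :=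
      mul_le_mul_of_nonneg_left h2 (by positivity)
    linarith
  -- the ball around x₀ is contained in R
  have hballR : ball x₀ (δ / 2) ⊆ R := by
    intro x' hx'
    have hdist : dist x' xb ≤ δ := by
      have h1 : dist x' x₀ < δ/2 := mem_ball.mp hx'
      have h2 : dist x₀ xb < δ/2 := by rw [dist_comm]; exact mem_ball.mp hxbball
      calc dist x' xb ≤ dist x' x₀ + dist x₀ xb := dist_triangle _ _ _
        _ ≤ δ := by linarith
    obtain ⟨w, hrw, hdw⟩ := chaintrack hC₁ hF' hR₁1 hLipR hchain hrτ hxbb x' hdist hδ1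
    have hwZ : w ∈ thickening η Z := by
      rw [mem_thickening_iff]
      refine ⟨zb, hzbZ, ?_⟩
      have h1 : δ * exp (L * r) ≤ δ * exp (L * τ) := by
        have := exp_le_exp.mpr (mul_le_mul_of_nonneg_left hrτ hL0)
        nlinarith
      have h2 : δ * exp (L * τ) ≤ η/2 := by rw [hδe]; exact min_le_right _ _
      calc dist w zb ≤ δ * exp (L * r) := hdw
        _ ≤ η/2 := by linarith
        _ < η := by linarith
    have hwR : minTime F T w ≠ ⊤ := interior_subset (hηZ hwZ)
    obtain ⟨r₂, hr₂0, z₂, hz₂, hch₂⟩ := minTime_ne_top_iff.mp hwR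
    exact minTime_ne_top_iff.mpr ⟨r + r₂, by linarith, z₂, hz₂, reach_trans hrw hch₂⟩
  -- contradiction with x₀ ∈ frontier R
  exact hx₀.2 (mem_interior_iff_mem_nhds.mpr
    (Filter.mem_of_superset (ball_mem_nhds x₀ (by positivity)) hballR))

end AuxProofStmt7
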